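/- Let n ≥ 1, α ∈ (0,1], and let N be a binomial random variable with parameters n and α. Then E[(nα)²/N² · 1{N > 0}] ≤ 6. -/

import Mathlib

open MeasureTheory

/-- Key choose identity: `(n+1)(n+2) C(n,k) = (k+1)(k+2) C(n+2,k+2)` in ℕ. -/
lemma choose_shift (n k : ℕ) :
    (n + 1) * ((n + 2) * n.choose k) = (k + 1) * ((k + 2) * (n + 2).choose (k + 2)) := by
  have h1 : (n + 1) * n.choose k = (n + 1).choose (k + 1) * (k + 1) :=
    Nat.add_one_mul_choose_eq n k
  have h2 : (n + 2) * (n + 1).choose (k + 1) = (n + 2).choose (k + 2) * (k + 2) :=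
    Nat.add_one_mul_choose_eq (n + 1) (k + 1)
  calc (n + 1) * ((n + 2) * n.choose k) = (n + 2) * ((n + 1) * n.choose k) := by ring
    _ = (n + 2) * ((n + 1).choose (k + 1) * (k + 1)) := by rw [h1]
    _ = (k + 1) * ((n + 2) * (n + 1).choose (k + 1)) := by ring
    _ = (k + 1) * ((n + 2).choose (k + 2) * (k + 2)) := by rw [h2]
    _ = _ := by ring

/-- If `N ~ Binomial(n, α)` with `n ≥ 1` and `α ∈ (0,1]`, then
`E[(nα)² / N² · 1{N > 0}] ≤ 6`. -/
theorem stmt_11 {Ω : Type*} [MeasurableSpace Ω] (P : Measure Ω) [IsProbabilityMeasure P]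
    (n : ℕ) (hn : 1 ≤ n) (α : ℝ) (hα0 : 0 < α) (hα1 : α ≤ 1)
    (N : Ω → ℕ) (hNmeas : Measurable N)
    (hbinom : ∀ k : ℕ,
      (P {ω | N ω = k}).toReal = (n.choose k : ℝ) * α ^ k * (1 - α) ^ (n - k)) :
    (∫ ω, (if 0 < N ω then ((n : ℝ) * α) ^ 2 / (N ω : ℝ) ^ 2 else 0) ∂P) ≤ 6 := by
  have hα' : (0:ℝ) ≤ 1 - α := by linarith
  set G : ℕ → ℝ := fun k => if 0 < k then ((n : ℝ) * α) ^ 2 / (k : ℝ) ^ 2 else 0 with hG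
  have hGnn : ∀ k, 0 ≤ G k := by
    intro k
    simp only [hG]
    split
    · positivity
    · exact le_refl 0
  have hGbd : ∀ k, ‖G k‖ ≤ ((n : ℝ) * α) ^ 2 := by
    intro k
    rw [Real.norm_eq_abs, abs_of_nonneg (hGnn k)]
    simp only [hG]
    split
    · rename_i hk
      have hk1 : (1:ℝ) ≤ (k:ℝ) := by exact_mod_cast hk
      have : (1:ℝ) ≤ (k:ℝ)^2 := by nlinarith
      rw [div_le_iff₀ (by nlinarith)]
      nlinarith [sq_nonneg ((n:ℝ)*α)]
    · positivity
  have hGmeas : Measurable G := measurable_from_top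
  have hmapPM : IsProbabilityMeasure (P.map N) :=
    Measure.isProbabilityMeasure_map hNmeas.aemeasurable
  have hGint : Integrable G (P.map N) := by
    refine (integrable_const (((n : ℝ) * α) ^ 2)).mono'
      hGmeas.aestronglyMeasurable ?_
    filter_upwards with k using hGbd k
  -- rewrite integral as tsum
  have hmapeq : ∀ k : ℕ, ((P.map N) {k}).toReal =
      (n.choose k : ℝ) * α ^ k * (1 - α) ^ (n - k) := by
    intro k
    rw [Measure.map_apply hNmeas (measurableSet_singleton k)]
    have : N ⁻¹' {k} = {ω | N ω = k} := rfl
    rw [this, hbinom k]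
  have hint_eq : (∫ ω, (if 0 < N ω then ((n : ℝ) * α) ^ 2 / (N ω : ℝ) ^ 2 else 0) ∂P)
      = ∑' k : ℕ, ((n.choose k : ℝ) * α ^ k * (1 - α) ^ (n - k)) * G k := by
    have h1 : (∫ ω, G (N ω) ∂P) = ∫ k, G k ∂(P.map N) :=
      (integral_map hNmeas.aemeasurable hGmeas.aestronglyMeasurable).symm
    have h2 : (∫ k, G k ∂(P.map N)) = ∑' k : ℕ, ((P.map N) {k}).toReal • G k :=
      integral_countable' hGint
    calc (∫ ω, (if 0 < N ω then ((n : ℝ) * α) ^ 2 / (N ω : ℝ) ^ 2 else 0) ∂P)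
        = ∫ ω, G (N ω) ∂P := rfl
      _ = ∑' k : ℕ, ((P.map N) {k}).toReal • G k := by rw [h1, h2]
      _ = _ := by
          refine tsum_congr fun k => ?_
          rw [hmapeq k, smul_eq_mul]
  rw [hint_eq]
  -- bounding function
  set h : ℕ → ℝ := fun k => 6 * ((n + 2).choose (k + 2) : ℝ) * α ^ (k + 2) * (1 - α) ^ (n - k)
    with hh
  have hzero_f : ∀ k ∉ Finset.range (n + 1),
      ((n.choose k : ℝ) * α ^ k * (1 - α) ^ (n - k)) * G k = 0 := by
    intro k hk
    rw [Finset.mem_range, not_lt] at hk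
    have : n.choose k = 0 := Nat.choose_eq_zero_of_lt (by omega)
    simp [this]
  have hzero_h : ∀ k ∉ Finset.range (n + 1), h k = 0 := by
    intro k hk
    rw [Finset.mem_range, not_lt] at hk
    have : (n + 2).choose (k + 2) = 0 := Nat.choose_eq_zero_of_lt (by omega)
    simp [hh, this]
  -- termwise bound
  have hterm : ∀ k, ((n.choose k : ℝ) * α ^ k * (1 - α) ^ (n - k)) * G k ≤ h k := by
    intro k
    simp only [hG, hh]
    rcases Nat.eq_zero_or_pos k with hk0 | hkpos
    · subst hk0
      rw [if_neg (lt_irrefl 0), mul_zero]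
      positivity
    · rw [if_pos hkpos]
      have hkR : (1:ℝ) ≤ (k:ℝ) := by exact_mod_cast hkpos
      -- key: C(n,k) * n^2 ≤ 6 * C(n+2,k+2) * k^2
      have hkey : (n.choose k : ℝ) * (n:ℝ)^2 ≤ 6 * ((n + 2).choose (k + 2) : ℝ) * (k:ℝ)^2 := by
        have hid : ((n:ℝ) + 1) * (((n:ℝ) + 2) * (n.choose k : ℝ))
            = ((k:ℝ) + 1) * (((k:ℝ) + 2) * ((n + 2).choose (k + 2) : ℝ)) := by
          have := choose_shift n k
          exact_mod_cast congrArg (fun m : ℕ => (m : ℝ)) this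
        have hC2 : (0:ℝ) ≤ ((n + 2).choose (k + 2) : ℝ) := Nat.cast_nonneg _
        have hC : (0:ℝ) ≤ (n.choose k : ℝ) := Nat.cast_nonneg _
        nlinarith [sq_nonneg ((k:ℝ) - 1), mul_nonneg hC2 (sq_nonneg ((k:ℝ) - 1))]
      have hpow : α ^ k * (1 - α) ^ (n - k) * α ^ 2 = α ^ (k + 2) * (1 - α) ^ (n - k) := by
        rw [pow_add]; ring
      have hk2pos : (0:ℝ) < (k:ℝ)^2 := by nlinarith
      have hrest : (0:ℝ) ≤ α ^ (k + 2) * (1 - α) ^ (n - k) := by positivity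
      calc (n.choose k : ℝ) * α ^ k * (1 - α) ^ (n - k) * (((n : ℝ) * α) ^ 2 / (k : ℝ) ^ 2)
          = ((n.choose k : ℝ) * (n:ℝ)^2 / (k:ℝ)^2) * (α ^ (k + 2) * (1 - α) ^ (n - k)) := by
            field_simp; ring
        _ ≤ (6 * ((n + 2).choose (k + 2) : ℝ)) * (α ^ (k + 2) * (1 - α) ^ (n - k)) := by
            refine mul_le_mul_of_nonneg_right ?_ hrest
            rw [div_le_iff₀ hk2pos]
            linarith [hkey]
        _ = 6 * ((n + 2).choose (k + 2) : ℝ) * α ^ (k + 2) * (1 - α) ^ (n - k) := by ring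
  have hsum_f : Summable fun k => ((n.choose k : ℝ) * α ^ k * (1 - α) ^ (n - k)) * G k :=
    summable_of_ne_finset_zero hzero_f
  have hsum_h : Summable h := summable_of_ne_finset_zero hzero_h
  have step1 : (∑' k : ℕ, ((n.choose k : ℝ) * α ^ k * (1 - α) ^ (n - k)) * G k)
      ≤ ∑' k : ℕ, h k := Summable.tsum_le_tsum hterm hsum_f hsum_h
  refine step1.trans ?_
  rw [tsum_eq_sum hzero_h]
  -- the binomial sum bound
  have hbinom_one : ∑ j ∈ Finset.range (n + 3),
      α ^ j * (1 - α) ^ (n + 2 - j) * ((n + 2).choose j : ℝ) = 1 := by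
    have := add_pow α (1 - α) (n + 2)
    simp only [add_sub_cancel, one_pow] at this
    rw [← this]
  have himg : ∑ k ∈ Finset.range (n + 1), h k
      = ∑ j ∈ (Finset.range (n + 1)).image (· + 2),
          6 * ((n + 2).choose j : ℝ) * α ^ j * (1 - α) ^ (n + 2 - j) := by
    rw [Finset.sum_image (by intro x _ y _ hxy; simp only at hxy; omega)]
    refine Finset.sum_congr rfl fun k hk => ?_
    rw [Finset.mem_range] at hk
    have : n + 2 - (k + 2) = n - k := by omega
    rw [this]
  rw [himg]
  have hsub : (Finset.range (n + 1)).image (· + 2) ⊆ Finset.range (n + 3) := by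
    intro j hj
    simp only [Finset.mem_image, Finset.mem_range] at hj ⊢
    obtain ⟨k, hk, rfl⟩ := hj
    omega
  calc ∑ j ∈ (Finset.range (n + 1)).image (· + 2),
        6 * ((n + 2).choose j : ℝ) * α ^ j * (1 - α) ^ (n + 2 - j)
      ≤ ∑ j ∈ Finset.range (n + 3),
        6 * ((n + 2).choose j : ℝ) * α ^ j * (1 - α) ^ (n + 2 - j) := by
        refine Finset.sum_le_sum_of_subset_of_nonneg hsub fun j _ _ => ?_
        positivity
    _ = 6 * ∑ j ∈ Finset.range (n + 3),
        α ^ j * (1 - α) ^ (n + 2 - j) * ((n + 2).choose j : ℝ) := by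
        rw [Finset.mul_sum]; exact Finset.sum_congr rfl fun j _ => by ring
    _ = 6 := by rw [hbinom_one, mul_one]
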